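/- Let μ, (Q_n), b, and P_n be as in the definition of paraorthogonal polynomials on the unit circle, and suppose P_n(ζ) = 0 with ζ ≠ 0. Then for every polynomial h of degree at most n−1, ∫ P_n(e^{iθ})/(e^{iθ} − ζ) · conj(h(e^{iθ})) dμ(θ) = conj(h(ζ)) · ∫ P_n(e^{iθ})/(e^{iθ} − ζ) dμ(θ). -/

import Mathlib

open Real Complex MeasureTheory Polynomial

lemma aux_circ (θ : ℝ) :
    Complex.exp (θ * Complex.I) * (starRingEnd ℂ) (Complex.exp (θ * Complex.I)) = 1 := by
  rw [← Complex.exp_conj, ← Complex.exp_add]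
  simp

lemma aux_norm_e (θ : ℝ) : ‖Complex.exp (θ * Complex.I)‖ = 1 :=
  Complex.norm_exp_ofReal_mul_I θ

lemma aux_norm_eval_le (f : Polynomial ℂ) (z : ℂ) (hz : ‖z‖ = 1) :
    ‖f.eval z‖ ≤ ∑ k ∈ f.support, ‖f.coeff k‖ := by
  rw [Polynomial.eval_eq_sum, Polynomial.sum_def]
  refine (norm_sum_le _ _).trans ?_
  refine Finset.sum_le_sum fun k _ => ?_
  rw [norm_mul, norm_pow, hz, one_pow, mul_one]

lemma aux_integrable (μ : Measure ℝ) [IsFiniteMeasure μ] (f g : Polynomial ℂ) :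
    Integrable (fun θ : ℝ => f.eval (Complex.exp (θ * Complex.I)) *
      (starRingEnd ℂ) (g.eval (Complex.exp (θ * Complex.I)))) μ := by
  have hc : Continuous (fun θ : ℝ => f.eval (Complex.exp (θ * Complex.I)) *
      (starRingEnd ℂ) (g.eval (Complex.exp (θ * Complex.I)))) := by
    have he : Continuous (fun θ : ℝ => Complex.exp (θ * Complex.I)) := by
      exact Complex.continuous_exp.comp (by continuity)
    exact ((f.continuous_aeval).comp he).mul
      (Complex.continuous_conj.comp ((g.continuous_aeval).comp he))
  refine Integrable.mono' (integrable_const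
    ((∑ k ∈ f.support, ‖f.coeff k‖) * (∑ k ∈ g.support, ‖g.coeff k‖)))
    hc.aestronglyMeasurable (ae_of_all _ fun θ => ?_)
  rw [norm_mul, RingHomIsometric.norm_map]
  exact mul_le_mul (aux_norm_eval_le f _ (aux_norm_e θ)) (aux_norm_eval_le g _ (aux_norm_e θ))
    (norm_nonneg _) (Finset.sum_nonneg fun _ _ => norm_nonneg _)

lemma aux_expand (μ : Measure ℝ) [IsFiniteMeasure μ] (f g : Polynomial ℂ) (N : ℕ)
    (hN : g.natDegree < N) :
    ∫ θ, f.eval (Complex.exp (θ * Complex.I)) *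
        (starRingEnd ℂ) (g.eval (Complex.exp (θ * Complex.I))) ∂μ
      = ∑ j ∈ Finset.range N, (starRingEnd ℂ) (g.coeff j) *
          ∫ θ, f.eval (Complex.exp (θ * Complex.I)) *
            (starRingEnd ℂ) ((Complex.exp (θ * Complex.I)) ^ j) ∂μ := by
  have h1 : (fun θ : ℝ => f.eval (Complex.exp (θ * Complex.I)) *
      (starRingEnd ℂ) (g.eval (Complex.exp (θ * Complex.I))))
      = fun θ : ℝ => ∑ j ∈ Finset.range N, (starRingEnd ℂ) (g.coeff j) *
          (f.eval (Complex.exp (θ * Complex.I)) *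
            (starRingEnd ℂ) ((Complex.exp (θ * Complex.I)) ^ j)) := by
    funext θ
    rw [Polynomial.eval_eq_sum_range' hN, map_sum, Finset.mul_sum]
    refine Finset.sum_congr rfl fun j _ => ?_
    rw [map_mul]; ring
  rw [h1, integral_finset_sum]
  · refine Finset.sum_congr rfl fun j _ => ?_
    rw [MeasureTheory.integral_const_mul]
  · intro j _
    have := (aux_integrable μ f (Polynomial.X ^ j)).const_mul ((starRingEnd ℂ) (g.coeff j))
    simpa using this

lemma aux_rev_eval (p : Polynomial ℂ) (z : ℂ) (hz : z ≠ 0) :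
    p.reverse.eval z = z ^ p.natDegree * p.eval z⁻¹ := by
  have hz' : z⁻¹ ≠ 0 := inv_ne_zero hz
  letI : Invertible (z⁻¹) := invertibleOfNonzero hz'
  have h := Polynomial.eval₂_reflect_mul_pow (RingHom.id ℂ) z⁻¹ p.natDegree p le_rfl
  rw [invOf_eq_inv, inv_inv] at h
  have h2 : p.reverse.eval z * (z⁻¹) ^ p.natDegree = p.eval z⁻¹ := by
    simpa [Polynomial.reverse, Polynomial.eval₂_eq_eval_map] using h
  field_simp at h2
  rw [one_div] at h2
  rw [← h2, inv_pow, mul_left_comm, mul_inv_cancel₀ (pow_ne_zero _ hz), mul_one]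

lemma aux_map_conj_eval (p : Polynomial ℂ) (y : ℂ) :
    (p.map (starRingEnd ℂ)).eval y = (starRingEnd ℂ) (p.eval ((starRingEnd ℂ) y)) := by
  rw [Polynomial.eval_map, Polynomial.eval₂_eq_sum, Polynomial.eval_eq_sum,
    Polynomial.sum_def, Polynomial.sum_def, map_sum]
  refine Finset.sum_congr rfl fun k _ => ?_
  simp

theorem stmt_11 (μ : Measure ℝ) [IsFiniteMeasure μ]
    (hsupp : μ (Set.Ico 0 (2 * π))ᶜ = 0)
    (hinf : ∀ s : Finset ℝ, μ ((↑s : Set ℝ))ᶜ ≠ 0)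
    (Q : ℕ → Polynomial ℂ)
    (hmonic : ∀ k, (Q k).Monic) (hdeg : ∀ k, (Q k).natDegree = k)
    (horth : ∀ k m, k ≠ m →
      ∫ θ, (Q k).eval (Complex.exp (θ * Complex.I)) *
        (starRingEnd ℂ) ((Q m).eval (Complex.exp (θ * Complex.I))) ∂μ = 0)
    (hnorm : ∀ k, ∫ θ, ‖(Q k).eval (Complex.exp (θ * Complex.I))‖ ^ 2 ∂μ ≠ 0)
    (n : ℕ) (hn : 1 ≤ n) (b : ℂ) (hb : ‖b‖ = 1)
    (P : Polynomial ℂ)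
    (hP : P = Polynomial.X * Q (n - 1) -
      Polynomial.C ((starRingEnd ℂ) b) * ((Q (n - 1)).map (starRingEnd ℂ)).reverse)
    (ζ : ℂ) (hζ0 : ζ ≠ 0) (hPζ : P.eval ζ = 0)
    (h : Polynomial ℂ) (hh : h.natDegree ≤ n - 1) :
    ∫ θ, (P /ₘ (Polynomial.X - Polynomial.C ζ)).eval (Complex.exp (θ * Complex.I)) *
        (starRingEnd ℂ) (h.eval (Complex.exp (θ * Complex.I))) ∂μ =
      (starRingEnd ℂ) (h.eval ζ) *
        ∫ θ, (P /ₘ (Polynomial.X - Polynomial.C ζ)).eval (Complex.exp (θ * Complex.I)) ∂μ := by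
  set S : Polynomial ℂ := P /ₘ (Polynomial.X - Polynomial.C ζ) with hSdef
  set Qm : Polynomial ℂ := Q (n - 1) with hQmdef
  set R : Polynomial ℂ := (Qm.map (starRingEnd ℂ)).reverse with hRdef
  have hEne : ∀ θ : ℝ, Complex.exp ((θ:ℂ) * Complex.I) ≠ 0 := fun θ => Complex.exp_ne_zero _
  have hEconj : ∀ θ : ℝ, (starRingEnd ℂ) (Complex.exp ((θ:ℂ) * Complex.I))
      = (Complex.exp ((θ:ℂ) * Complex.I))⁻¹ := by
    intro θ
    exact eq_inv_of_mul_eq_one_left (by rw [mul_comm]; exact aux_circ θ)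
  -- degrees
  have hQmdeg : Qm.natDegree = n - 1 := hdeg _
  have hQmne : Qm ≠ 0 := (hmonic _).ne_zero
  have hmapdeg : (Qm.map (starRingEnd ℂ)).natDegree = n - 1 := by
    rw [natDegree_map_eq_of_injective (RingHom.injective _), hQmdeg]
  have hRdeg : R.natDegree ≤ n - 1 := by
    rw [hRdef, ← hmapdeg]; exact reverse_natDegree_le _
  have hPdeg : P.natDegree = n := by
    have h1 : (Polynomial.X * Qm).natDegree = n := by
      rw [natDegree_mul Polynomial.X_ne_zero hQmne, natDegree_X, hQmdeg]; omega
    have h2 : (Polynomial.C ((starRingEnd ℂ) b) * R).natDegree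
        < (Polynomial.X * Qm).natDegree := by
      rw [h1]
      exact lt_of_le_of_lt (le_trans (natDegree_C_mul_le _ _) hRdeg) (by omega)
    rw [hP, natDegree_sub_eq_left_of_natDegree_lt h2, h1]
  have hPne : P ≠ 0 := by
    intro hc; rw [hc, natDegree_zero] at hPdeg; omega
  have hPS : (Polynomial.X - Polynomial.C ζ) * S = P :=
    mul_divByMonic_eq_iff_isRoot.mpr hPζ
  have hSne : S ≠ 0 := by
    intro hc; rw [hc, mul_zero] at hPS; exact hPne hPS.symm
  have hSdeg : S.natDegree = n - 1 := by
    have h1 := natDegree_mul (X_sub_C_ne_zero ζ) hSne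
    rw [hPS, natDegree_X_sub_C, hPdeg] at h1
    omega
  -- evaluation facts
  have hPeval : ∀ z : ℂ, P.eval z =
      z * Qm.eval z - (starRingEnd ℂ) b * R.eval z := by
    intro z; rw [hP]; simp
  have hPSeval : ∀ z : ℂ, P.eval z = (z - ζ) * S.eval z := by
    intro z; rw [← hPS]; simp
  have hReval : ∀ z : ℂ, z ≠ 0 → R.eval z =
      z ^ (n - 1) * (starRingEnd ℂ) (Qm.eval ((starRingEnd ℂ) z⁻¹)) := by
    intro z hz
    rw [hRdef, aux_rev_eval _ _ hz, hmapdeg, aux_map_conj_eval]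
  have hRevalE : ∀ θ : ℝ, R.eval (Complex.exp ((θ:ℂ) * Complex.I)) =
      (Complex.exp ((θ:ℂ) * Complex.I)) ^ (n - 1) *
        (starRingEnd ℂ) (Qm.eval (Complex.exp ((θ:ℂ) * Complex.I))) := by
    intro θ
    rw [hReval _ (hEne θ), map_inv₀, hEconj θ, inv_inv]
  -- Q 0 = 1
  have hQ0 : Q 0 = 1 := by
    have h0 := hmonic 0
    rw [Polynomial.Monic, Polynomial.leadingCoeff, hdeg 0] at h0
    have := Polynomial.eq_C_of_natDegree_eq_zero (hdeg 0)
    rw [this, h0, map_one]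
  -- orthogonality of Qm against monomials of lower degree
  have monoQ : ∀ j, j < n - 1 →
      ∫ θ, Qm.eval (Complex.exp (θ * Complex.I)) *
        (starRingEnd ℂ) ((Complex.exp (θ * Complex.I)) ^ j) ∂μ = 0 := by
    intro j
    induction j using Nat.strong_induction_on with
    | _ j ih =>
      intro hj
      have hQj : ∫ θ, Qm.eval (Complex.exp (θ * Complex.I)) *
          (starRingEnd ℂ) ((Q j).eval (Complex.exp (θ * Complex.I))) ∂μ = 0 :=
        horth (n - 1) j (by omega)
      have hsplit : (fun θ : ℝ => Qm.eval (Complex.exp (θ * Complex.I)) *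
          (starRingEnd ℂ) ((Complex.exp (θ * Complex.I)) ^ j))
          = fun θ : ℝ => Qm.eval (Complex.exp (θ * Complex.I)) *
              (starRingEnd ℂ) ((Q j).eval (Complex.exp (θ * Complex.I)))
            + Qm.eval (Complex.exp (θ * Complex.I)) *
              (starRingEnd ℂ) (((Polynomial.X : Polynomial ℂ) ^ j - Q j).eval
                (Complex.exp (θ * Complex.I))) := by
        funext θ
        rw [Polynomial.eval_sub, map_sub, mul_sub, Polynomial.eval_pow, Polynomial.eval_X]
        ring
      have hint2 : Integrable (fun θ : ℝ => Qm.eval (Complex.exp (θ * Complex.I)) *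
          (starRingEnd ℂ) (((Polynomial.X : Polynomial ℂ) ^ j - Q j).eval
            (Complex.exp (θ * Complex.I)))) μ := aux_integrable μ _ _
      rw [hsplit, integral_add (aux_integrable μ _ _) hint2, hQj, zero_add]
      rcases Nat.eq_zero_or_pos j with h0 | hpos
      · subst h0
        have : ((Polynomial.X : Polynomial ℂ) ^ 0 - Q 0) = 0 := by rw [hQ0, pow_zero, sub_self]
        simp only [this, Polynomial.eval_zero, map_zero, mul_zero, integral_zero]
      · have hr : ((Polynomial.X : Polynomial ℂ) ^ j - Q j).natDegree < j := by
          have hle : ((Polynomial.X : Polynomial ℂ) ^ j - Q j).natDegree ≤ j - 1 := by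
            rw [Polynomial.natDegree_le_iff_coeff_eq_zero]
            intro N hN
            rcases Nat.lt_or_ge N j with hNj | hNj
            · omega
            rcases Nat.eq_or_lt_of_le hNj with hNe | hNl
            · have hmon := hmonic j
              rw [Polynomial.Monic, Polynomial.leadingCoeff, hdeg j] at hmon
              rw [Polynomial.coeff_sub, ← hNe, Polynomial.coeff_X_pow, if_pos rfl, hmon,
                sub_self]
            · rw [Polynomial.coeff_sub, Polynomial.coeff_X_pow, if_neg (by omega),
                Polynomial.coeff_eq_zero_of_natDegree_lt (by rw [hdeg j]; omega), sub_self]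
          omega
        rw [aux_expand μ Qm _ j hr]
        refine Finset.sum_eq_zero fun i hi => ?_
        rw [ih i (Finset.mem_range.mp hi) (by have := Finset.mem_range.mp hi; omega), mul_zero]
  -- orthogonality of P against monomials z^j, 1 ≤ j ≤ n-1
  have intPmono : ∀ j, 1 ≤ j → j ≤ n - 1 →
      ∫ θ, P.eval (Complex.exp (θ * Complex.I)) *
        (starRingEnd ℂ) ((Complex.exp (θ * Complex.I)) ^ j) ∂μ = 0 := by
    intro j hj1 hjn
    obtain ⟨j', rfl⟩ : ∃ j', j = j' + 1 := ⟨j - 1, by omega⟩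
    set d : ℕ := (n - 1) - (j' + 1) with hd
    have hsplit : (fun θ : ℝ => P.eval (Complex.exp (θ * Complex.I)) *
        (starRingEnd ℂ) ((Complex.exp (θ * Complex.I)) ^ (j' + 1)))
        = fun θ : ℝ => Qm.eval (Complex.exp (θ * Complex.I)) *
            (starRingEnd ℂ) ((Complex.exp (θ * Complex.I)) ^ j')
          - (starRingEnd ℂ) b * (starRingEnd ℂ) (Qm.eval (Complex.exp (θ * Complex.I)) *
              (starRingEnd ℂ) ((Complex.exp (θ * Complex.I)) ^ d)) := by
      funext θ
      have hpow : (n : ℕ) - 1 = d + (j' + 1) := by omega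
      rw [hPeval, hRevalE θ, hpow, pow_add]
      simp only [map_mul, map_pow, Complex.conj_conj, hEconj θ, map_inv₀, inv_inv]
      have hz := hEne θ
      field_simp
      have h1 : Complex.exp (↑θ * Complex.I) * (Complex.exp (↑θ * Complex.I))⁻¹ = 1 := mul_inv_cancel₀ hz
      have h2 : Complex.exp (↑θ * Complex.I) ^ j' * (Complex.exp (↑θ * Complex.I))⁻¹ ^ j' = 1 := by rw [← mul_pow, h1, one_pow]
      linear_combination (-(Complex.exp (↑θ * Complex.I) ^ d * (starRingEnd ℂ) b * (starRingEnd ℂ) (Qm.eval (Complex.exp (↑θ * Complex.I))) *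
          Complex.exp (↑θ * Complex.I) ^ j' * (Complex.exp (↑θ * Complex.I))⁻¹ ^ j') + Qm.eval (Complex.exp (↑θ * Complex.I)) * (Complex.exp (↑θ * Complex.I))⁻¹ ^ j') * h1
        - (Complex.exp (↑θ * Complex.I) ^ d * (starRingEnd ℂ) b * (starRingEnd ℂ) (Qm.eval (Complex.exp (↑θ * Complex.I)))) * h2
    have hint1 : Integrable (fun θ : ℝ => Qm.eval (Complex.exp (θ * Complex.I)) *
        (starRingEnd ℂ) ((Complex.exp (θ * Complex.I)) ^ j')) μ := by
      have := aux_integrable μ Qm (Polynomial.X ^ j')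
      simp only [Polynomial.eval_pow, Polynomial.eval_X] at this
      exact this
    have hint2 : Integrable (fun θ : ℝ => (starRingEnd ℂ) b *
        (starRingEnd ℂ) (Qm.eval (Complex.exp (θ * Complex.I)) *
          (starRingEnd ℂ) ((Complex.exp (θ * Complex.I)) ^ d))) μ := by
      have hbase := (aux_integrable μ (Polynomial.X ^ d) Qm).const_mul ((starRingEnd ℂ) b)
      refine hbase.congr (ae_of_all _ fun θ => ?_)
      simp only [Polynomial.eval_pow, Polynomial.eval_X, map_mul, Complex.conj_conj]
      ring
    rw [hsplit, integral_sub hint1 hint2, MeasureTheory.integral_const_mul]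
    have e1 : ∫ θ, Qm.eval (Complex.exp (θ * Complex.I)) *
        (starRingEnd ℂ) ((Complex.exp (θ * Complex.I)) ^ j') ∂μ = 0 :=
      monoQ j' (by omega)
    have e2 : ∫ θ, (starRingEnd ℂ) (Qm.eval (Complex.exp (θ * Complex.I)) *
        (starRingEnd ℂ) ((Complex.exp (θ * Complex.I)) ^ d)) ∂μ = 0 := by
      rw [integral_conj, monoQ d (by omega), map_zero]
    rw [e1, e2, mul_zero, sub_zero]
  -- orthogonality of P against polynomials vanishing at 0 of degree < n
  have intPpoly : ∀ G : Polynomial ℂ, G.coeff 0 = 0 → G.natDegree < n →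
      ∫ θ, P.eval (Complex.exp (θ * Complex.I)) *
        (starRingEnd ℂ) (G.eval (Complex.exp (θ * Complex.I))) ∂μ = 0 := by
    intro G hG0 hGn
    rw [aux_expand μ P G n hGn]
    refine Finset.sum_eq_zero fun j hj => ?_
    rcases Nat.eq_zero_or_pos j with rfl | hj1
    · rw [hG0, map_zero, zero_mul]
    · rw [intPmono j hj1 (by have := Finset.mem_range.mp hj; omega), mul_zero]
  -- quotient of h - h(ζ)
  set k : Polynomial ℂ := (h - Polynomial.C (h.eval ζ)) /ₘ (Polynomial.X - Polynomial.C ζ)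
    with hkdef
  have hkq : (Polynomial.X - Polynomial.C ζ) * k = h - Polynomial.C (h.eval ζ) :=
    mul_divByMonic_eq_iff_isRoot.mpr (by simp [Polynomial.IsRoot])
  have hXk0 : ((Polynomial.X : Polynomial ℂ) * k).coeff 0 = 0 := by
    rw [Polynomial.mul_coeff_zero, Polynomial.coeff_X_zero, zero_mul]
  have hXkdeg : ((Polynomial.X : Polynomial ℂ) * k).natDegree < n := by
    rcases eq_or_ne k 0 with hk0 | hk0
    · rw [hk0, mul_zero, natDegree_zero]; omega
    · have h1 : ((Polynomial.X - Polynomial.C ζ) * k).natDegree = 1 + k.natDegree := by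
        rw [natDegree_mul (X_sub_C_ne_zero ζ) hk0, natDegree_X_sub_C]
      have h2 : (h - Polynomial.C (h.eval ζ)).natDegree ≤ n - 1 := by
        rw [Polynomial.natDegree_sub_C]; exact hh
      rw [natDegree_mul Polynomial.X_ne_zero hk0, natDegree_X]
      rw [hkq] at h1
      omega
  -- key vanishing
  have key : ∫ θ, S.eval (Complex.exp (θ * Complex.I)) *
      (starRingEnd ℂ) ((h - Polynomial.C (h.eval ζ)).eval (Complex.exp (θ * Complex.I))) ∂μ
      = 0 := by
    rcases eq_or_ne (ζ * (starRingEnd ℂ) ζ) 1 with hζ1 | hζ1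
    · -- ζ on the unit circle
      have hpt : (fun θ : ℝ => S.eval (Complex.exp (θ * Complex.I)) *
          (starRingEnd ℂ) ((h - Polynomial.C (h.eval ζ)).eval (Complex.exp (θ * Complex.I))))
          = fun θ : ℝ => (-(starRingEnd ℂ) ζ) * (P.eval (Complex.exp (θ * Complex.I)) *
              (starRingEnd ℂ) (((Polynomial.X : Polynomial ℂ) * k).eval
                (Complex.exp (θ * Complex.I)))) := by
        funext θ
        rw [← hkq, hPSeval]
        simp only [Polynomial.eval_mul, Polynomial.eval_sub, Polynomial.eval_X,
          Polynomial.eval_C, map_mul, map_sub, hEconj θ]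
        have hz := hEne θ
        field_simp
        linear_combination (-(Polynomial.eval (Complex.exp (↑θ * Complex.I)) S *
          (starRingEnd ℂ) (Polynomial.eval (Complex.exp (↑θ * Complex.I)) k))) * hζ1
      rw [hpt, MeasureTheory.integral_const_mul, intPpoly _ hXk0 hXkdeg, mul_zero]
    · -- ζ off the unit circle : S vanishes μ-a.e. on the circle
      set ζ' : ℂ := ((starRingEnd ℂ) ζ)⁻¹ with hζ'def
      have hcζ : (starRingEnd ℂ) ζ ≠ 0 := star_ne_zero.mpr hζ0
      have hζ'0 : ζ' ≠ 0 := inv_ne_zero hcζ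
      have hζ'ζ : ζ' ≠ ζ := by
        intro hc
        apply hζ1
        have h2 : ζ' * (starRingEnd ℂ) ζ = 1 := by
          rw [hζ'def]; exact inv_mul_cancel₀ hcζ
        rw [hc] at h2
        exact h2
      have hζ'conj : (starRingEnd ℂ) ζ' = ζ⁻¹ := by
        rw [hζ'def, map_inv₀, Complex.conj_conj]
      have hbb : b * (starRingEnd ℂ) b = 1 := by
        rw [Complex.mul_conj, Complex.normSq_eq_norm_sq, hb]
        norm_num
      have hb0 : b ≠ 0 := by
        intro hc; rw [hc] at hb; simp at hb
      have hPζ' : P.eval ζ' = 0 := by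
        have e1 : P.eval ζ = ζ * Qm.eval ζ -
            (starRingEnd ℂ) b * (ζ ^ (n - 1) * (starRingEnd ℂ) (Qm.eval ζ')) := by
          rw [hPeval, hReval ζ hζ0, map_inv₀]
        have e2 : P.eval ζ' = ζ' * Qm.eval ζ' -
            (starRingEnd ℂ) b * (ζ' ^ (n - 1) * (starRingEnd ℂ) (Qm.eval ζ)) := by
          rw [hPeval, hReval ζ' hζ'0, map_inv₀, hζ'conj, inv_inv]
        rw [e1] at hPζ
        rw [e2]
        have hconj := congrArg (starRingEnd ℂ) hPζ
        simp only [map_sub, map_mul, map_pow, Complex.conj_conj, map_zero] at hconj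
        have hζ'pow : ζ' ^ (n - 1) = ((starRingEnd ℂ) ζ ^ (n - 1))⁻¹ := by
          rw [hζ'def, inv_pow]
        set q' : ℂ := Qm.eval ζ' with hq'def
        set cq : ℂ := (starRingEnd ℂ) (Qm.eval ζ) with hcqdef
        rw [hζ'pow, hζ'def]
        have hwne : (starRingEnd ℂ) ζ ^ (n - 1) ≠ 0 := pow_ne_zero _ hcζ
        field_simp
        linear_combination (-(starRingEnd ℂ) b) * hconj +
          (-((starRingEnd ℂ) ζ ^ (n - 1) * q')) * hbb
      have hSζ' : S.eval ζ' = 0 := by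
        have h2 := hPSeval ζ'
        rw [hPζ'] at h2
        exact (mul_eq_zero.mp h2.symm).resolve_left (sub_ne_zero.mpr hζ'ζ)
      -- moments of S
      have hrec : ∀ j, j + 1 ≤ n - 1 →
          ∫ θ, S.eval (Complex.exp (θ * Complex.I)) *
            (starRingEnd ℂ) ((Complex.exp (θ * Complex.I)) ^ (j + 1)) ∂μ
          = ζ⁻¹ * ∫ θ, S.eval (Complex.exp (θ * Complex.I)) *
              (starRingEnd ℂ) ((Complex.exp (θ * Complex.I)) ^ j) ∂μ := by
        intro j hj
        have hpt : (fun θ : ℝ => P.eval (Complex.exp (θ * Complex.I)) *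
            (starRingEnd ℂ) ((Complex.exp (θ * Complex.I)) ^ (j + 1)))
            = fun θ : ℝ => S.eval (Complex.exp (θ * Complex.I)) *
                (starRingEnd ℂ) ((Complex.exp (θ * Complex.I)) ^ j)
              - ζ * (S.eval (Complex.exp (θ * Complex.I)) *
                (starRingEnd ℂ) ((Complex.exp (θ * Complex.I)) ^ (j + 1))) := by
          funext θ
          rw [hPSeval]
          simp only [map_pow, hEconj θ]
          have hz := hEne θ
          field_simp
          have h1 : Complex.exp (↑θ * Complex.I) * (Complex.exp (↑θ * Complex.I))⁻¹ = 1 := mul_inv_cancel₀ hz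
          linear_combination (S.eval (Complex.exp (↑θ * Complex.I)) * (Complex.exp (↑θ * Complex.I))⁻¹ ^ j) * h1
        have hint1 : Integrable (fun θ : ℝ => S.eval (Complex.exp (θ * Complex.I)) *
            (starRingEnd ℂ) ((Complex.exp (θ * Complex.I)) ^ j)) μ := by
          have := aux_integrable μ S (Polynomial.X ^ j)
          simp only [Polynomial.eval_pow, Polynomial.eval_X] at this
          exact this
        have hint2 : Integrable (fun θ : ℝ => S.eval (Complex.exp (θ * Complex.I)) *
            (starRingEnd ℂ) ((Complex.exp (θ * Complex.I)) ^ (j + 1))) μ := by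
          have := aux_integrable μ S (Polynomial.X ^ (j + 1))
          simp only [Polynomial.eval_pow, Polynomial.eval_X] at this
          exact this
        have h0 := intPmono (j + 1) (by omega) hj
        rw [hpt, integral_sub hint1 (hint2.const_mul ζ), MeasureTheory.integral_const_mul]
          at h0
        rw [sub_eq_zero] at h0
        rw [h0, ← mul_assoc, inv_mul_cancel₀ hζ0, one_mul]
      have hmom : ∀ j, j < n →
          ∫ θ, S.eval (Complex.exp (θ * Complex.I)) *
            (starRingEnd ℂ) ((Complex.exp (θ * Complex.I)) ^ j) ∂μ
          = (ζ⁻¹) ^ j * ∫ θ, S.eval (Complex.exp (θ * Complex.I)) *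
              (starRingEnd ℂ) ((Complex.exp (θ * Complex.I)) ^ 0) ∂μ := by
        intro j
        induction j with
        | zero => intro _; rw [pow_zero, one_mul]
        | succ i ih =>
          intro hi
          rw [hrec i (by omega), ih (by omega), pow_succ]
          ring
      have hform : ∀ g : Polynomial ℂ, g.natDegree < n →
          ∫ θ, S.eval (Complex.exp (θ * Complex.I)) *
            (starRingEnd ℂ) (g.eval (Complex.exp (θ * Complex.I))) ∂μ
          = (starRingEnd ℂ) (g.eval ζ') *
            ∫ θ, S.eval (Complex.exp (θ * Complex.I)) *
              (starRingEnd ℂ) ((Complex.exp (θ * Complex.I)) ^ 0) ∂μ := by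
        intro g hg
        rw [aux_expand μ S g n hg, Polynomial.eval_eq_sum_range' hg, map_sum,
          Finset.sum_mul]
        refine Finset.sum_congr rfl fun j hj => ?_
        rw [hmom j (Finset.mem_range.mp hj), map_mul, map_pow, hζ'conj]
        ring
      have hSS : ∫ θ, S.eval (Complex.exp (θ * Complex.I)) *
          (starRingEnd ℂ) (S.eval (Complex.exp (θ * Complex.I))) ∂μ = 0 := by
        rw [hform S (by omega), hSζ', map_zero, zero_mul]
      -- S vanishes a.e.
      have hnormint : Integrable (fun θ : ℝ =>
          ‖S.eval (Complex.exp (θ * Complex.I))‖ ^ 2) μ := by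
        refine (aux_integrable μ S S).norm.congr (ae_of_all _ fun θ => ?_)
        show ‖S.eval (Complex.exp ((θ : ℂ) * Complex.I)) *
          (starRingEnd ℂ) (S.eval (Complex.exp ((θ : ℂ) * Complex.I)))‖ = _
        rw [norm_mul, RingHomIsometric.norm_map]
        exact (pow_two _).symm
      have hre : ∫ θ, ‖S.eval (Complex.exp (θ * Complex.I))‖ ^ 2 ∂μ = 0 := by
        have hc : (fun θ : ℝ => S.eval (Complex.exp (θ * Complex.I)) *
            (starRingEnd ℂ) (S.eval (Complex.exp (θ * Complex.I))))
            = fun θ : ℝ => ((‖S.eval (Complex.exp (θ * Complex.I))‖ ^ 2 : ℝ) : ℂ) := by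
          funext θ
          rw [Complex.mul_conj, Complex.normSq_eq_norm_sq]
        rw [hc] at hSS
        have h2 : ((∫ θ, ‖S.eval (Complex.exp ((θ : ℝ) * Complex.I))‖ ^ 2 ∂μ : ℝ) : ℂ) = 0 := by
          rw [← hSS]
          exact (integral_ofReal (𝕜 := ℂ)).symm
        exact_mod_cast h2
      have hae : (fun θ : ℝ => S.eval (Complex.exp (θ * Complex.I))) =ᵐ[μ] 0 := by
        have h0 := (integral_eq_zero_iff_of_nonneg (fun θ => sq_nonneg _) hnormint).mp hre
        filter_upwards [h0] with θ hθ
        have : ‖S.eval (Complex.exp ((θ : ℂ) * Complex.I))‖ ^ 2 = 0 := hθ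
        simpa using pow_eq_zero_iff (n := 2) (by norm_num) |>.mp this
      have hzero : (fun θ : ℝ => S.eval (Complex.exp (θ * Complex.I)) *
          (starRingEnd ℂ) ((h - Polynomial.C (h.eval ζ)).eval
            (Complex.exp (θ * Complex.I)))) =ᵐ[μ] (fun _ => 0) := by
        filter_upwards [hae] with θ hθ
        have hθ' : S.eval (Complex.exp ((θ : ℂ) * Complex.I)) = 0 := hθ
        rw [hθ', zero_mul]
      rw [integral_congr_ae hzero, integral_zero]
  -- final assembly
  have hintS : Integrable (fun θ : ℝ => S.eval (Complex.exp (θ * Complex.I))) μ := by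
    have := aux_integrable μ S 1
    simpa using this
  have hsplitF : (fun θ : ℝ => S.eval (Complex.exp (θ * Complex.I)) *
      (starRingEnd ℂ) (h.eval (Complex.exp (θ * Complex.I))))
      = fun θ : ℝ => S.eval (Complex.exp (θ * Complex.I)) *
          (starRingEnd ℂ) ((h - Polynomial.C (h.eval ζ)).eval (Complex.exp (θ * Complex.I)))
        + (starRingEnd ℂ) (h.eval ζ) * S.eval (Complex.exp (θ * Complex.I)) := by
    funext θ
    simp only [Polynomial.eval_sub, Polynomial.eval_C, map_sub]
    ring
  rw [hsplitF, integral_add (aux_integrable μ S _) (hintS.const_mul _), key, zero_add,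
    MeasureTheory.integral_const_mul]
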